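/- Let k ≥ 1 and let w ∈ ℝ_{≥0}^k. Suppose that for every subset T ⊆ {1,…,k} we are given a vector y^T ∈ ℝ_{≥0}^k such that (i) y^T_j = 0 for every j ∉ T, and (ii) ∑_{j=1}^k y^T_j ≥ ∑_{j ∈ T} w_j. Then there exist nonnegative reals (λ_T)_{T ⊆ {1,…,k}} with ∑_T λ_T = 1 such that: (a) ∑_T λ_T · y^T_j ≤ w_j for every coordinate j; and (b) ∑_{j=1}^k ∑_T λ_T · y^T_j ≥ (1 − 1/e) · ∑_{j=1}^k w_j. -/
import Mathlib


open Finset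

/-- The convex hull sampler: given a target vector `w ∈ ℝ_{≥0}^k` and for
every subset `T ⊆ [k]` a vector `y^T ∈ ℝ_{≥0}^k` supported on `T` with
`|y^T| ≥ ∑_{j ∈ T} w_j`, there is a convex combination of the `y^T` that is coordinatewise
dominated by `w` and whose total mass is at least `(1 - 1/e)·|w|`. -/
theorem convex_hull_sampler
    (k : ℕ) (hk : 1 ≤ k)
    (w : Fin k → ℝ) (hw : ∀ j, 0 ≤ w j)
    (y : Finset (Fin k) → Fin k → ℝ) (hy : ∀ T j, 0 ≤ y T j)
    (hy0 : ∀ (T : Finset (Fin k)) (j : Fin k), j ∉ T → y T j = 0)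
    (hylen : ∀ T : Finset (Fin k), ∑ j ∈ T, w j ≤ ∑ j, y T j) :
    ∃ lam : Finset (Fin k) → ℝ,
      (∀ T, 0 ≤ lam T) ∧
      (∑ T : Finset (Fin k), lam T = 1) ∧
      (∀ j, ∑ T : Finset (Fin k), lam T * y T j ≤ w j) ∧
      ((1 - 1 / Real.exp 1) * ∑ j, w j ≤ ∑ j, ∑ T : Finset (Fin k), lam T * y T j) := by
  suffices H : ∀ n : ℕ, ∀ (x : Fin k → ℝ) (r : ℝ), 0 ≤ r → r ≤ 1 →
      (∀ j, 0 ≤ x j) → (∀ j, x j ≤ w j) →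
      (univ.filter (fun j => x j < w j)).card ≤ n →
      ∃ lam : Finset (Fin k) → ℝ, (∀ T, 0 ≤ lam T) ∧
        (∑ T : Finset (Fin k), lam T = r) ∧
        (∀ j, x j + ∑ T : Finset (Fin k), lam T * y T j ≤ w j) ∧
        (∑ j, w j) - ((∑ j, x j) + ∑ j, ∑ T : Finset (Fin k), lam T * y T j)
          ≤ Real.exp (-r) * ((∑ j, w j) - ∑ j, x j) by
    obtain ⟨lam, h1, h2, h3, h4⟩ := H k (fun _ => 0) 1 zero_le_one le_rfl (fun _ => le_rfl) hw
      ((card_filter_le _ _).trans (by simp))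
    refine ⟨lam, h1, h2, fun j => by simpa using h3 j, ?_⟩
    simp only [Finset.sum_const_zero, zero_add, sub_zero] at h4
    have he : Real.exp (-1 : ℝ) = 1 / Real.exp 1 := by
      rw [Real.exp_neg]; ring
    rw [he] at h4
    linarith
  -- the case when `x` already equals `w`
  have base : ∀ (x : Fin k → ℝ) (r : ℝ), 0 ≤ r → (∀ j, x j = w j) →
      ∃ lam : Finset (Fin k) → ℝ, (∀ T, 0 ≤ lam T) ∧
        (∑ T : Finset (Fin k), lam T = r) ∧
        (∀ j, x j + ∑ T : Finset (Fin k), lam T * y T j ≤ w j) ∧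
        (∑ j, w j) - ((∑ j, x j) + ∑ j, ∑ T : Finset (Fin k), lam T * y T j)
          ≤ Real.exp (-r) * ((∑ j, w j) - ∑ j, x j) := by
    intro x r hr0 heq
    refine ⟨fun T => if T = ∅ then r else 0, ?_, ?_, ?_, ?_⟩
    · intro T; dsimp only; split <;> simp [hr0]
    · simp
    · intro j
      have h0 : ∀ T : Finset (Fin k), (if T = ∅ then r else 0) * y T j = 0 := by
        intro T
        rcases eq_or_ne T ∅ with h | h
        · simp [h, hy0 ∅ j (by simp)]
        · simp [h]
      simp only [Finset.sum_congr rfl (fun T _ => h0 T), Finset.sum_const_zero, add_zero,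
        heq j, le_refl]
    · have hwx : ∑ j, x j = ∑ j, w j := Finset.sum_congr rfl (fun j _ => heq j)
      have h0 : ∀ j, ∑ T : Finset (Fin k), (if T = ∅ then r else 0) * y T j = 0 := by
        intro j
        refine Finset.sum_eq_zero fun T _ => ?_
        rcases eq_or_ne T ∅ with h | h
        · simp [h, hy0 ∅ j (by simp)]
        · simp [h]
      have hz : ∀ j, y (∅ : Finset (Fin k)) j = 0 := fun j => hy0 ∅ j (by simp)
      simp [hwx, h0, hz]
  -- the case when no time is left
  have base0 : ∀ (x : Fin k → ℝ), (∀ j, x j ≤ w j) →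
      ∃ lam : Finset (Fin k) → ℝ, (∀ T, 0 ≤ lam T) ∧
        (∑ T : Finset (Fin k), lam T = (0:ℝ)) ∧
        (∀ j, x j + ∑ T : Finset (Fin k), lam T * y T j ≤ w j) ∧
        (∑ j, w j) - ((∑ j, x j) + ∑ j, ∑ T : Finset (Fin k), lam T * y T j)
          ≤ Real.exp (-(0:ℝ)) * ((∑ j, w j) - ∑ j, x j) := by
    intro x hxw
    refine ⟨fun _ => 0, fun _ => le_rfl, by simp, fun j => by simpa using hxw j, ?_⟩
    simp
  intro n
  induction n with
  | zero =>
    intro x r hr0 hr1 hx0 hxw hcard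
    have heq : ∀ j, x j = w j := by
      intro j
      by_contra h
      have hlt : x j < w j := lt_of_le_of_ne (hxw j) h
      have hmem : j ∈ univ.filter (fun j => x j < w j) := by simp [hlt]
      have := Finset.card_pos.mpr ⟨j, hmem⟩
      omega
    exact base x r hr0 heq
  | succ n ih =>
    intro x r hr0 hr1 hx0 hxw hcard
    set T : Finset (Fin k) := univ.filter (fun j => x j < w j) with hT
    rcases eq_or_ne T ∅ with hTe | hTne
    · refine base x r hr0 fun j => ?_
      by_contra h
      have hlt : x j < w j := lt_of_le_of_ne (hxw j) h
      have hmem : j ∈ T := by simp [hT, hlt]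
      simp [hTe] at hmem
    rcases eq_or_lt_of_le hr0 with hr | hrpos
    · subst hr
      exact base0 x hxw
    -- main case
    have hTmem : ∀ j, j ∈ T ↔ x j < w j := fun j => by simp [hT]
    have hS : (T.filter fun j => 0 < y T j).Nonempty := by
      rw [Finset.filter_nonempty_iff]
      by_contra h
      push_neg at h
      have hzero : ∀ j, y T j = 0 := by
        intro j
        by_cases hj : j ∈ T
        · exact le_antisymm (h j hj) (hy T j)
        · exact hy0 T j hj
      have h1 : ∑ j, y T j = 0 := Finset.sum_eq_zero fun j _ => hzero j
      have h2 : 0 < ∑ j ∈ T, w j := by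
        refine Finset.sum_pos (fun j hj => lt_of_le_of_lt (hx0 j) ((hTmem j).1 hj)) ?_
        exact Finset.nonempty_iff_ne_empty.mpr hTne
      have := hylen T
      linarith
    set S := T.filter fun j => 0 < y T j with hSdef
    set δ : ℝ := min r (S.inf' hS fun j => (w j - x j) / y T j) with hδ
    have hSy : ∀ j ∈ S, 0 < y T j := fun j hj => (Finset.mem_filter.mp hj).2
    have hST : ∀ j ∈ S, j ∈ T := fun j hj => (Finset.mem_filter.mp hj).1
    have hδpos : 0 < δ := by
      refine lt_min hrpos ?_
      rw [Finset.lt_inf'_iff]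
      intro j hj
      exact div_pos (sub_pos.mpr ((hTmem j).1 (hST j hj))) (hSy j hj)
    have hδr : δ ≤ r := min_le_left _ _
    have hstep : ∀ j, x j + δ * y T j ≤ w j := by
      intro j
      by_cases hj : j ∈ S
      · have h1 : δ ≤ (w j - x j) / y T j :=
          le_trans (min_le_right _ _) (Finset.inf'_le _ hj)
        have := (le_div_iff₀ (hSy j hj)).mp h1
        linarith
      · have hy0' : y T j = 0 := by
          by_cases hjT : j ∈ T
          · by_contra h
            exact hj (Finset.mem_filter.mpr ⟨hjT, lt_of_le_of_ne (hy T j) (Ne.symm h)⟩)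
          · exact hy0 T j hjT
        rw [hy0', mul_zero, add_zero]
        exact hxw j
    have hwx0 : 0 ≤ (∑ j, w j) - ∑ j, x j := by
      have := Finset.sum_le_sum (fun j (_ : j ∈ univ) => hxw j)
      linarith
    have hgain : (∑ j, w j) - (∑ j, x j) ≤ ∑ j, y T j := by
      refine le_trans ?_ (hylen T)
      have h1 : ∑ j ∈ T, w j = (∑ j, w j) - ∑ j ∈ Tᶜ, w j := by
        rw [eq_sub_iff_add_eq, Finset.sum_add_sum_compl]
      have h2 : ∑ j ∈ Tᶜ, w j ≤ ∑ j, x j := by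
        refine le_trans (Finset.sum_le_sum fun j hj => ?_)
          (Finset.sum_le_sum_of_subset_of_nonneg (Finset.subset_univ _) fun j _ _ => hx0 j)
        have : j ∉ T := Finset.mem_compl.mp hj
        rw [hTmem] at this
        linarith [not_lt.mp this]
      linarith
    rcases eq_or_lt_of_le hδr with hδe | hδlt
    · -- time runs out: single step of length r
      refine ⟨fun T' => if T' = T then r else 0, ?_, ?_, ?_, ?_⟩
      · intro T'; dsimp only; split <;> simp [hr0]
      · simp
      · intro j
        simp only [ite_mul, zero_mul, Finset.sum_ite_eq', Finset.mem_univ, if_true]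
        rw [hδe] at hstep
        exact hstep j
      · have hsum : ∀ j, ∑ T' : Finset (Fin k), (if T' = T then r else 0) * y T' j
            = r * y T j := by
          intro j
          simp only [ite_mul, zero_mul, Finset.sum_ite_eq', Finset.mem_univ, if_true]
        simp only [Finset.sum_congr rfl fun j _ => hsum j]
        rw [← Finset.mul_sum]
        have hexp : 1 - r ≤ Real.exp (-r) := by
          have := Real.add_one_le_exp (-r)
          linarith
        have h1 : r * ((∑ j, w j) - ∑ j, x j) ≤ r * ∑ j, y T j :=
          mul_le_mul_of_nonneg_left hgain hr0
        nlinarith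
    · -- a coordinate saturates: step of length δ < r, then induct
      have hδeq : δ = S.inf' hS fun j => (w j - x j) / y T j := by
        rcases min_cases r (S.inf' hS fun j => (w j - x j) / y T j) with ⟨h1, h2⟩ | ⟨h1, h2⟩
        · rw [hδ, h1] at hδlt; exact absurd hδlt (lt_irrefl r)
        · rw [hδ, h1]
      obtain ⟨j0, hj0S, hj0⟩ := Finset.exists_mem_eq_inf' hS fun j => (w j - x j) / y T j
      have hx'j0 : x j0 + δ * y T j0 = w j0 := by
        rw [hδeq, hj0, div_mul_cancel₀ _ (ne_of_gt (hSy j0 hj0S))]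
        ring
      set x' : Fin k → ℝ := fun j => x j + δ * y T j with hx'
      have hx'0 : ∀ j, 0 ≤ x' j := fun j =>
        add_nonneg (hx0 j) (mul_nonneg hδpos.le (hy T j))
      have hx'w : ∀ j, x' j ≤ w j := hstep
      have hcard' : (univ.filter fun j => x' j < w j).card ≤ n := by
        have hsub : (univ.filter fun j => x' j < w j) ⊆ T.erase j0 := by
          intro j hj
          rw [Finset.mem_filter] at hj
          refine Finset.mem_erase.mpr ⟨?_, ?_⟩
          · rintro rfl
            rw [hx'] at hj
            simp only at hj
            rw [hx'j0] at hj
            exact lt_irrefl _ hj.2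
          · rw [hTmem]
            have : x j ≤ x' j := le_add_of_nonneg_right (mul_nonneg hδpos.le (hy T j))
            linarith [hj.2]
        have h1 := Finset.card_le_card hsub
        have h2 : (T.erase j0).card = T.card - 1 := Finset.card_erase_of_mem (hST j0 hj0S)
        have h3 : 1 ≤ T.card := Finset.card_pos.mpr ⟨j0, hST j0 hj0S⟩
        omega
      obtain ⟨lam', h1', h2', h3', h4'⟩ := ih x' (r - δ) (by linarith) (by linarith) hx'0 hx'w hcard'
      refine ⟨fun T' => lam' T' + if T' = T then δ else 0, ?_, ?_, ?_, ?_⟩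
      · intro T'
        dsimp only
        refine add_nonneg (h1' T') ?_
        split <;> simp [hδpos.le]
      · rw [Finset.sum_add_distrib, h2']
        simp only [Finset.sum_ite_eq', Finset.mem_univ, if_true]
        ring
      · intro j
        have hdist : ∑ T' : Finset (Fin k), (lam' T' + if T' = T then δ else 0) * y T' j
            = (∑ T' : Finset (Fin k), lam' T' * y T' j) + δ * y T j := by
          simp only [add_mul, Finset.sum_add_distrib, ite_mul, zero_mul,
            Finset.sum_ite_eq', Finset.mem_univ, if_true]
        rw [hdist]
        have := h3' j
        rw [hx'] at this
        simp only at this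
        linarith
      · have hdist : ∀ j, ∑ T' : Finset (Fin k), (lam' T' + if T' = T then δ else 0) * y T' j
            = (∑ T' : Finset (Fin k), lam' T' * y T' j) + δ * y T j := by
          intro j
          simp only [add_mul, Finset.sum_add_distrib, ite_mul, zero_mul,
            Finset.sum_ite_eq', Finset.mem_univ, if_true]
        simp only [Finset.sum_congr rfl fun j (_ : j ∈ univ) => hdist j]
        rw [Finset.sum_add_distrib]
        have hx'sum : ∑ j, x' j = (∑ j, x j) + δ * ∑ j, y T j := by
          rw [hx']
          simp only
          rw [Finset.sum_add_distrib, Finset.mul_sum]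
        have hA : (∑ j, w j) - ∑ j, x' j ≤ Real.exp (-δ) * ((∑ j, w j) - ∑ j, x j) := by
          have hexp : 1 - δ ≤ Real.exp (-δ) := by
            have := Real.add_one_le_exp (-δ)
            linarith
          have h1 : δ * ((∑ j, w j) - ∑ j, x j) ≤ δ * ∑ j, y T j :=
            mul_le_mul_of_nonneg_left hgain hδpos.le
          nlinarith
        have hB : Real.exp (-(r - δ)) * ((∑ j, w j) - ∑ j, x' j)
            ≤ Real.exp (-(r - δ)) * (Real.exp (-δ) * ((∑ j, w j) - ∑ j, x j)) :=
          mul_le_mul_of_nonneg_left hA (Real.exp_nonneg _)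
        have hC : Real.exp (-(r - δ)) * Real.exp (-δ) = Real.exp (-r) := by
          rw [← Real.exp_add]
          ring_nf
        have h4'' := h4'
        calc (∑ j, w j) - ((∑ j, x j) + ((∑ j, ∑ T' : Finset (Fin k), lam' T' * y T' j)
              + ∑ j, δ * y T j))
            = (∑ j, w j) - ((∑ j, x' j) + ∑ j, ∑ T' : Finset (Fin k), lam' T' * y T' j) := by
              rw [hx'sum, Finset.mul_sum]; ring
          _ ≤ Real.exp (-(r - δ)) * ((∑ j, w j) - ∑ j, x' j) := h4''
          _ ≤ Real.exp (-(r - δ)) * (Real.exp (-δ) * ((∑ j, w j) - ∑ j, x j)) := hB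
          _ = Real.exp (-r) * ((∑ j, w j) - ∑ j, x j) := by rw [← mul_assoc, hC]
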